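/- (1) For any sequences (k_t)_{t≥0} with k_t > 0, (p_t)_{t≥0} with p_t > 0, and (d_t)_{t≥1} with d_t ≥ 0 satisfying k_{t+1} = (βA(1−α)·k_t^α − p_t)/G for all t ≥ 0 and p_t = (Aα·k_t^{α−1}/G)·p_{t−1} − d_t for all t ≥ 1, the sequence x_t := Aα·k_t^α/(G·k_{t+1}) satisfies x_t > ρ and x_t + ρ/x_{t+1} ≥ 1 + ρ for all t. (2) Conversely, for any k_0 > 0 and any sequence (x_t)_{t≥0} with x_t > ρ and x_t + ρ/x_{t+1} ≥ 1 + ρ for all t, define k_{t+1} = Aα·k_t^α/(G·x_t), p_t = (Aα/ρ)·k_t^α − G·k_{t+1}, and d_{t+1} = (Aα/G)·k_{t+1}^{α−1}·p_t − p_{t+1}; then k_t > 0, p_t > 0, d_t ≥ 0, the two difference equations above hold, and moreover k_{t+1} = (Aα/G)^{(1−α^{t+1})/(1−α)}·k_0^{α^{t+1}}/(x_t·x_{t−1}^α⋯x_0^{α^t}), d_{t+1} = (Aα/ρ)·k_{t+1}^α·(x_t + ρ/x_{t+1} − 1 − ρ), and d_t/p_t = (x_{t−1} + ρ/x_t − 1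 − ρ)/(1 − ρ/x_t). -/

import Mathlib

open Filter Topology Set

set_option maxHeartbeats 2000000 in
/-- Lemma `lem:CD`, closed-form solutions with log utility and
Cobb–Douglas production: (1) in any positive-price equilibrium, the transformed
variable `x_t = Aα k_t^α/(G k_{t+1})` satisfies `x_t > ρ` and
`x_t + ρ/x_{t+1} ≥ 1 + ρ`; (2) conversely, any sequence `(x_t)` satisfying these
inequalities generates an equilibrium via the stated formulas, with closed forms
for `k_{t+1}`, `d_{t+1}`, and `d_t/p_t`. -/
theorem stmt16 (G A α β ρ : ℝ)
    (hG : 0 < G) (hA : 0 < A) (hα : α ∈ Set.Ioo (0:ℝ) 1) (hβ : β ∈ Set.Ioo (0:ℝ) 1)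
    (hρ : ρ = α / (β * (1 - α))) :
    -- Part (1)
    ((∀ k p d x : ℕ → ℝ,
      (∀ t, 0 < k t) → (∀ t, 0 < p t) → (∀ t, 0 ≤ d (t + 1)) →
      (∀ t, k (t + 1) = (β * A * (1 - α) * k t ^ α - p t) / G) →
      (∀ t, p (t + 1) = A * α * k (t + 1) ^ (α - 1) / G * p t - d (t + 1)) →
      (∀ t, x t = A * α * k t ^ α / (G * k (t + 1))) →
      ∀ t, ρ < x t ∧ 1 + ρ ≤ x t + ρ / x (t + 1))) ∧
    -- Part (2)
    (∀ k0 : ℝ, 0 < k0 → ∀ x : ℕ → ℝ,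
      (∀ t, ρ < x t) → (∀ t, 1 + ρ ≤ x t + ρ / x (t + 1)) →
      ∀ k p d : ℕ → ℝ, k 0 = k0 →
      (∀ t, k (t + 1) = A * α * k t ^ α / (G * x t)) →
      (∀ t, p t = A * α / ρ * k t ^ α - G * k (t + 1)) →
      (∀ t, d (t + 1) = A * α / G * k (t + 1) ^ (α - 1) * p t - p (t + 1)) →
      (∀ t, 0 < k t) ∧ (∀ t, 0 < p t) ∧ (∀ t, 0 ≤ d (t + 1)) ∧
      (∀ t, k (t + 1) = (β * A * (1 - α) * k t ^ α - p t) / G) ∧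
      (∀ t, p (t + 1) = A * α * k (t + 1) ^ (α - 1) / G * p t - d (t + 1)) ∧
      (∀ t : ℕ, k (t + 1) =
        (A * α / G) ^ ((1 - α ^ (t + 1)) / (1 - α)) * k0 ^ (α ^ (t + 1)) /
          ∏ i ∈ Finset.range (t + 1), x (t - i) ^ (α ^ i)) ∧
      (∀ t, d (t + 1) = A * α / ρ * k (t + 1) ^ α * (x t + ρ / x (t + 1) - 1 - ρ)) ∧
      (∀ t, d (t + 1) / p (t + 1) =
        (x t + ρ / x (t + 1) - 1 - ρ) / (1 - ρ / x (t + 1)))) := by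
  obtain ⟨hα0, hα1⟩ := hα
  obtain ⟨hβ0, hβ1⟩ := hβ
  have h1α : (0:ℝ) < 1 - α := by linarith
  have hρ0 : 0 < ρ := by rw [hρ]; positivity
  have hAαρ : A * α / ρ = β * A * (1 - α) := by
    rw [hρ]; field_simp
  constructor
  · -- Part (1)
    intro k p d x hk hp hd hkeq hpeq hx
    have hkα : ∀ t, (0:ℝ) < k t ^ α := fun t => Real.rpow_pos_of_pos (hk t) α
    have hGkx : ∀ t, G * k (t + 1) * x t = A * α * k t ^ α := by
      intro t
      rw [hx t, mul_comm (G * k (t + 1)), div_mul_cancel₀ _ (mul_pos hG (hk (t + 1))).ne']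
    have hAαρ' : A * α = ρ * (β * A * (1 - α)) := by
      rw [hρ]; field_simp
    have hpmul : ∀ t, p t * ρ = G * k (t + 1) * (x t - ρ) := by
      intro t
      have h1 : G * k (t + 1) = β * A * (1 - α) * k t ^ α - p t := by
        rw [hkeq t]; field_simp
      have h2 := hGkx t
      linear_combination ρ * h1 - (k t ^ α) * hAαρ' - h2
    have hxgt : ∀ t, ρ < x t := by
      intro t
      nlinarith [mul_pos (hp t) hρ0, mul_pos hG (hk (t + 1)), hpmul t]
    refine fun t => ⟨hxgt t, ?_⟩
    have hx1 : 0 < x (t + 1) := hρ0.trans (hxgt (t + 1))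
    have hr : k (t + 1) ^ (α - 1) = k (t + 1) ^ α / k (t + 1) := by
      rw [Real.rpow_sub (hk (t + 1)), Real.rpow_one]
    have hk1 : k (t + 1) ≠ 0 := (hk (t + 1)).ne'
    have h := hpeq t
    rw [hr] at h
    field_simp at h
    have h2 := hGkx (t + 1)
    have hp0 := hpmul t
    have hp1 := hpmul (t + 1)
    have claim : d (t + 1) * ρ * (k (t + 1) * G) =
        G * G * k (t + 1) * k (t + 2) * (x (t + 1) * x t - ρ * x (t + 1) - x (t + 1) + ρ) := by
      linear_combination ρ * h - (k (t + 1) * G) * hp1 + (A * α * k (t + 1) ^ α) * hp0 -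
        (G * k (t + 1) * (x t - ρ)) * h2
    have hE : 0 ≤ x (t + 1) * x t - ρ * x (t + 1) - x (t + 1) + ρ := by
      nlinarith [claim, mul_nonneg (mul_nonneg (hd t) hρ0.le) (mul_pos (hk (t + 1)) hG).le,
        mul_pos (mul_pos (mul_pos hG hG) (hk (t + 1))) (hk (t + 2))]
    have key : (1 + ρ - x t) * x (t + 1) ≤ ρ := by nlinarith [hE]
    have h9 : 1 + ρ - x t ≤ ρ / x (t + 1) := (le_div_iff₀ hx1).mpr key
    linarith
  · -- Part (2)
    intro k0 hk0pos x hx1 hx2 k p d hk00 hkdef hpdef hddef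
    have hxpos : ∀ t, 0 < x t := fun t => hρ0.trans (hx1 t)
    have hAαρ' : A * α = ρ * (β * A * (1 - α)) := by
      rw [hρ]; field_simp
    have hkpos : ∀ t, 0 < k t := by
      intro t
      induction t with
      | zero => rw [hk00]; exact hk0pos
      | succ t ih =>
        rw [hkdef t]
        exact div_pos (mul_pos (mul_pos hA hα0) (Real.rpow_pos_of_pos ih α))
          (mul_pos hG (hxpos t))
    have hkα : ∀ t, (0:ℝ) < k t ^ α := fun t => Real.rpow_pos_of_pos (hkpos t) α
    have hGkx : ∀ t, G * k (t + 1) * x t = A * α * k t ^ α := by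
      intro t
      rw [hkdef t]
      field_simp [hG.ne', (hxpos t).ne']
    have hpmul : ∀ t, p t * ρ = G * k (t + 1) * (x t - ρ) := by
      intro t
      have h2 := hGkx t
      rw [hpdef t]
      field_simp
      linear_combination -h2
    have hppos : ∀ t, 0 < p t := by
      intro t
      nlinarith [hpmul t, mul_pos (mul_pos hG (hkpos (t + 1))) (sub_pos.mpr (hx1 t)), hρ0]
    have hr : ∀ t, k (t + 1) ^ (α - 1) = k (t + 1) ^ α / k (t + 1) := fun t => by
      rw [Real.rpow_sub (hkpos (t + 1)), Real.rpow_one]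
    have hdform : ∀ t, d (t + 1) = A * α / ρ * k (t + 1) ^ α * (x t + ρ / x (t + 1) - 1 - ρ) := by
      intro t
      have h2 := hGkx (t + 1)
      have hp0 := hpmul t
      have hp1 := hpmul (t + 1)
      rw [hddef t, hr t]
      field_simp [hG.ne', (hkpos (t + 1)).ne', (hxpos (t + 1)).ne', hρ0.ne']
      linear_combination (A * α * k (t + 1) ^ α * x (t + 1)) * hp0 -
        (G * k (t + 1) * x (t + 1)) * hp1 - (G * k (t + 1) * (x (t + 1) - ρ)) * h2
    have hd0 : ∀ t, 0 ≤ d (t + 1) := by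
      intro t
      rw [hdform t]
      exact mul_nonneg (mul_nonneg (by positivity) (hkα (t + 1)).le) (by linarith [hx2 t])
    refine ⟨hkpos, hppos, hd0, ?_, ?_, ?_, hdform, ?_⟩
    · intro t
      rw [hpdef t, ← hAαρ]
      field_simp
      ring
    · intro t
      linear_combination hddef t
    · intro t
      induction t with
      | zero =>
        norm_num [Finset.prod_range_one, Real.rpow_one, div_self h1α.ne']
        rw [hkdef 0, hk00]
        ring
      | succ t ih =>
        have hC : (0:ℝ) < A * α / G := by positivity
        have hPpos : (0:ℝ) < ∏ i ∈ Finset.range (t + 1), x (t - i) ^ (α ^ i) :=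
          Finset.prod_pos fun i _ => Real.rpow_pos_of_pos (hxpos _) _
        have hPα : (∏ i ∈ Finset.range (t + 1), x (t - i) ^ (α ^ i)) ^ α
            = ∏ i ∈ Finset.range (t + 1), x (t - i) ^ (α ^ (i + 1)) := by
          rw [← Real.finset_prod_rpow _ _ (fun i _ => (Real.rpow_pos_of_pos (hxpos _) _).le) α]
          exact Finset.prod_congr rfl fun i _ => by
            rw [← Real.rpow_mul (hxpos (t - i)).le, ← pow_succ]
        have he : (1 - α ^ (t + 1 + 1)) / (1 - α) = 1 + (1 - α ^ (t + 1)) / (1 - α) * α := by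
          field_simp
          ring
        rw [hkdef (t + 1), ih,
          Real.div_rpow (by positivity) hPpos.le,
          Real.mul_rpow (Real.rpow_nonneg hC.le _) (Real.rpow_nonneg hk0pos.le _),
          ← Real.rpow_mul hC.le, ← Real.rpow_mul hk0pos.le, hPα,
          Finset.prod_range_succ' (fun i => x (t + 1 - i) ^ α ^ i) (t + 1), he,
          Real.rpow_add hC, Real.rpow_one, pow_succ α (t + 1)]
        simp only [Nat.succ_sub_succ_eq_sub, Nat.sub_zero, pow_zero, Real.rpow_one]
        field_simp
    · intro t
      have h2 := hGkx (t + 1)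
      have hp1 := hpmul (t + 1)
      have hpform2 : p (t + 1) = A * α / ρ * k (t + 1) ^ α * (1 - ρ / x (t + 1)) := by
        field_simp [hρ0.ne', (hxpos (t + 1)).ne']
        linear_combination x (t + 1) * hp1 + (x (t + 1) - ρ) * h2
      have hCpos : (0:ℝ) < A * α / ρ * k (t + 1) ^ α := mul_pos (by positivity) (hkα (t + 1))
      rw [hdform t, hpform2, mul_div_mul_left _ _ hCpos.ne']
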